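/- Suppose f : ℝⁿ → ℝ satisfies 0 ≤ f(w) ≤ C|w|²(a + r(w)) for all w, where a ≥ 1, C > 0 and r(w) = Σᵢ wᵢ^{2mᵢ}. Then the volume of the sublevel set {w : f(w) ≤ 1} is at least c · a^{−n/2}, where c > 0 depends only on C, n, and m₁,…,m_n. -/

import Mathlib

open MeasureTheory

theorem stmt16 (n : ℕ) (m : Fin n → ℕ) (hm : ∀ i, 1 ≤ m i) (C : ℝ) (hC : 0 < C) :
    ∃ c : ℝ, 0 < c ∧
      ∀ (f : (Fin n → ℝ) → ℝ) (a : ℝ), 1 ≤ a →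
        (∀ w, 0 ≤ f w) →
        (∀ w, f w ≤ C * (∑ i, w i ^ 2) * (a + ∑ i, w i ^ (2 * m i))) →
        ENNReal.ofReal (c * a ^ (-(n : ℝ) / 2))
          ≤ volume {w : Fin n → ℝ | f w ≤ 1} := by
  set K : ℝ := C * n * (n + 1) + 1 with hK
  have hKpos : (0:ℝ) < K := by positivity
  set ε : ℝ := min 1 (1 / K) with hε
  have hεpos : 0 < ε := lt_min one_pos (by positivity)
  have hε1 : ε ≤ 1 := min_le_left _ _
  have hεK : ε ≤ 1 / K := min_le_right _ _
  set δ : ℝ := Real.sqrt ε with hδ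
  have hδpos : 0 < δ := Real.sqrt_pos.2 hεpos
  have hδsq : δ ^ 2 = ε := Real.sq_sqrt hεpos.le
  refine ⟨(2 * δ) ^ n, by positivity, ?_⟩
  intro f a ha hf0 hfle
  have hapos : 0 < a := lt_of_lt_of_le one_pos ha
  have hsa : 0 < Real.sqrt a := Real.sqrt_pos.2 hapos
  set b : ℝ := δ / Real.sqrt a with hb
  have hbpos : 0 < b := div_pos hδpos hsa
  have hsub : (Set.univ.pi fun _ : Fin n => Set.Icc (-b) b) ⊆ {w | f w ≤ 1} := by
    intro w hw
    simp only [Set.mem_pi, Set.mem_univ, Set.mem_Icc, forall_true_left] at hw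
    have hwsq : ∀ i, w i ^ 2 ≤ ε / a := by
      intro i
      have h1 : |w i| ≤ b := abs_le.2 ⟨(hw i).1, (hw i).2⟩
      calc w i ^ 2 = |w i| ^ 2 := (sq_abs _).symm
        _ ≤ b ^ 2 := pow_le_pow_left₀ (abs_nonneg _) h1 2
        _ = ε / a := by rw [hb, div_pow, hδsq, Real.sq_sqrt hapos.le]
    have hεa1 : ε / a ≤ 1 := by
      rw [div_le_one hapos]; exact hε1.trans ha
    have hs1 : ∑ i, w i ^ 2 ≤ n * (ε / a) := by
      calc ∑ i, w i ^ 2 ≤ ∑ _i : Fin n, ε / a :=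
            Finset.sum_le_sum fun i _ => hwsq i
        _ = n * (ε / a) := by simp [Finset.sum_const, mul_comm]
    have hs2 : ∑ i, w i ^ (2 * m i) ≤ n * a := by
      have key : ∀ i : Fin n, w i ^ (2 * m i) ≤ ε / a := by
        intro i
        calc w i ^ (2 * m i) = (w i ^ 2) ^ (m i) := by rw [← pow_mul]
          _ ≤ (ε / a) ^ (m i) := pow_le_pow_left₀ (sq_nonneg _) (hwsq i) (m i)
          _ ≤ ε / a := pow_le_of_le_one (div_nonneg hεpos.le hapos.le) hεa1 (by have := hm i; omega)
      calc ∑ i, w i ^ (2 * m i) ≤ ∑ _i : Fin n, ε / a :=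
            Finset.sum_le_sum fun i _ => key i
        _ = n * (ε / a) := by simp [Finset.sum_const, mul_comm]
        _ ≤ n * 1 := by gcongr
        _ ≤ n * a := by
            have : (0:ℝ) ≤ (n:ℝ) := Nat.cast_nonneg n
            nlinarith
    have hS0 : (0:ℝ) ≤ ∑ i, w i ^ 2 := by positivity
    have hT0 : (0:ℝ) ≤ a + ∑ i, w i ^ (2 * m i) :=
      add_nonneg hapos.le (Finset.sum_nonneg fun i _ => by rw [pow_mul]; positivity)
    have hmain : C * (∑ i, w i ^ 2) * (a + ∑ i, w i ^ (2 * m i))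
        ≤ C * (n * (ε / a)) * ((n + 1) * a) := by
      have hT : a + ∑ i, w i ^ (2 * m i) ≤ (n + 1) * a := by nlinarith
      have h1 : C * (∑ i, w i ^ 2) ≤ C * (n * (ε / a)) := by
        exact mul_le_mul_of_nonneg_left hs1 hC.le
      exact mul_le_mul h1 hT hT0
        (mul_nonneg hC.le (mul_nonneg (Nat.cast_nonneg n)
          (div_nonneg hεpos.le hapos.le)))
    have heq : C * (n * (ε / a)) * ((n + 1) * a) = C * n * (n + 1) * ε := by
      field_simp
    have hfin : C * n * (n + 1) * ε ≤ 1 := by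
      have h2 : C * n * (n + 1) * ε ≤ C * n * (n + 1) * (1 / K) := by
        apply mul_le_mul_of_nonneg_left hεK
        have h0 : (0:ℝ) ≤ (n:ℝ) := Nat.cast_nonneg n
        have h1 : (0:ℝ) ≤ (n:ℝ) + 1 := by linarith
        exact mul_nonneg (mul_nonneg hC.le h0) h1
      have h3 : C * n * (n + 1) * (1 / K) ≤ 1 := by
        rw [hK]
        rw [mul_one_div, div_le_one hKpos]
        linarith
      linarith
    have := hfle w
    simp only [Set.mem_setOf_eq]
    calc f w ≤ C * (∑ i, w i ^ 2) * (a + ∑ i, w i ^ (2 * m i)) := hfle w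
      _ ≤ C * (n * (ε / a)) * ((n + 1) * a) := hmain
      _ = C * n * (n + 1) * ε := heq
      _ ≤ 1 := hfin
  have hvol : volume (Set.univ.pi fun _ : Fin n => Set.Icc (-b) b)
      = ENNReal.ofReal ((2 * b) ^ n) := by
    rw [volume_pi_pi]
    simp only [Real.volume_Icc]
    rw [Finset.prod_const, Finset.card_univ, Fintype.card_fin,
      show b - -b = 2 * b by ring,
      ← ENNReal.ofReal_pow (by linarith [hbpos] : (0:ℝ) ≤ 2 * b)]
  have hpow : a ^ (-(n : ℝ) / 2) = ((Real.sqrt a) ^ n)⁻¹ := by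
    rw [Real.sqrt_eq_rpow, ← Real.rpow_natCast (a ^ ((1:ℝ)/2)) n,
      ← Real.rpow_mul hapos.le, ← Real.rpow_neg hapos.le]
    congr 1
    ring
  have hcval : (2 * δ) ^ n * a ^ (-(n : ℝ) / 2) = (2 * b) ^ n := by
    rw [hpow, hb]
    rw [← mul_div_assoc, div_pow, div_eq_mul_inv]
  calc ENNReal.ofReal ((2 * δ) ^ n * a ^ (-(n : ℝ) / 2))
      = ENNReal.ofReal ((2 * b) ^ n) := by rw [hcval]
    _ = volume (Set.univ.pi fun _ : Fin n => Set.Icc (-b) b) := hvol.symm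
    _ ≤ volume {w : Fin n → ℝ | f w ≤ 1} := measure_mono hsub
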